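/- Let C ∈ ℝ^{m×m}. The matrix ΛW ⊗ C is Schur stable if and only if ρ(ΛW)·ρ(C) < 1. If this holds, then for every u ∈ ℝ^{mn} the solution of x(k+1) = (ΛW ⊗ C) x(k) + ((I_n − Λ) ⊗ I_m) u with x(0) = u converges as k → ∞ to x'_C = (I_{mn} − ΛW ⊗ C)^{-1} ((I_n − Λ) ⊗ I_m) u. -/

import Mathlib

open Filter Matrix Kronecker

/-- Spectral radius of a real matrix: the supremum of moduli of its complex eigenvalues. -/
noncomputable def specRad {ι : Type*} [Fintype ι] [DecidableEq ι] (A : Matrix ι ι ℝ) : ℝ :=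
  sSup ((fun z : ℂ => ‖z‖) '' spectrum ℂ (A.map (algebraMap ℝ ℂ)))

attribute [local instance] Matrix.linftyOpNormedRing Matrix.linftyOpNormedAlgebra

namespace FJAux

open scoped ENNReal NNReal

variable {ι κ : Type*} [Fintype ι] [DecidableEq ι] [Fintype κ] [DecidableEq κ]

/-- Complexification of a real matrix. -/
noncomputable def cf (A : Matrix ι ι ℝ) : Matrix ι ι ℂ := A.map (algebraMap ℝ ℂ)

lemma cf_kron (A : Matrix ι ι ℝ) (B : Matrix κ κ ℝ) :
    cf (A ⊗ₖ B) = (cf A) ⊗ₖ (cf B) := by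
  ext ⟨i, k⟩ ⟨j, l⟩
  simp [cf, Matrix.kroneckerMap_apply, Matrix.map_apply]

lemma cf_pow (A : Matrix ι ι ℝ) (k : ℕ) : cf (A ^ k) = (cf A) ^ k := by
  induction k with
  | zero =>
    simp only [pow_zero, cf]
    exact Matrix.map_one _ (map_zero _) (map_one _)
  | succ k ih =>
    simp only [pow_succ, cf] at *
    rw [← ih, Matrix.map_mul]

lemma kron_pow (A : Matrix ι ι ℂ) (B : Matrix κ κ ℂ) (k : ℕ) :
    (A ⊗ₖ B) ^ k = (A ^ k) ⊗ₖ (B ^ k) := by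
  induction k with
  | zero => simp [Matrix.one_kronecker_one]
  | succ k ih => rw [pow_succ, pow_succ, pow_succ, ih, Matrix.mul_kronecker_mul]

lemma nnnorm_cf (A : Matrix ι ι ℝ) : ‖cf A‖₊ = ‖A‖₊ := by
  rw [Matrix.linfty_opNNNorm_def, Matrix.linfty_opNNNorm_def]
  congr 1
  ext i
  congr 1
  ext j
  simp [cf, Matrix.map_apply]

lemma specRad_def (A : Matrix ι ι ℝ) :
    specRad A = sSup ((fun z : ℂ => ‖z‖) '' spectrum ℂ (cf A)) := rfl

lemma nnnorm_kron_le (A : Matrix ι ι ℂ) (B : Matrix κ κ ℂ) :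
    ‖A ⊗ₖ B‖₊ ≤ ‖A‖₊ * ‖B‖₊ := by
  rw [Matrix.linfty_opNNNorm_def]
  refine Finset.sup_le fun p _ => ?_
  obtain ⟨i, k⟩ := p
  calc ∑ q : ι × κ, ‖(A ⊗ₖ B) (i, k) q‖₊
      = (∑ j : ι, ‖A i j‖₊) * (∑ l : κ, ‖B k l‖₊) := by
        rw [Fintype.sum_prod_type, Finset.sum_mul_sum]
        refine Finset.sum_congr rfl fun j _ => Finset.sum_congr rfl fun l _ => ?_
        simp [Matrix.kroneckerMap_apply, nnnorm_mul]
    _ ≤ ‖A‖₊ * ‖B‖₊ := by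
        refine mul_le_mul' ?_ ?_
        · rw [Matrix.linfty_opNNNorm_def]
          exact Finset.le_sup (f := fun i : ι => ∑ j : ι, ‖A i j‖₊) (Finset.mem_univ i)
        · rw [Matrix.linfty_opNNNorm_def]
          exact Finset.le_sup (f := fun k : κ => ∑ l : κ, ‖B k l‖₊) (Finset.mem_univ k)

lemma bddAbove_norms (A : Matrix ι ι ℝ) :
    BddAbove ((fun z : ℂ => ‖z‖) '' spectrum ℂ (cf A)) :=
  (((Matrix.finite_spectrum (cf A)).image _)).bddAbove

lemma specRad_nonneg (A : Matrix ι ι ℝ) : 0 ≤ specRad A :=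
  Real.sSup_nonneg (by rintro x ⟨z, _, rfl⟩; exact norm_nonneg z)

lemma norm_le_specRad {A : Matrix ι ι ℝ} {z : ℂ} (hz : z ∈ spectrum ℂ (cf A)) :
    ‖z‖ ≤ specRad A :=
  le_csSup (bddAbove_norms A) ⟨z, hz, rfl⟩

lemma spectralRadius_cf (A : Matrix ι ι ℝ) :
    spectralRadius ℂ (cf A) = ENNReal.ofReal (specRad A) := by
  by_cases hS : (spectrum ℂ (cf A)).Nonempty
  · apply le_antisymm
    · rw [spectralRadius]
      refine iSup₂_le fun z hz => ?_
      rw [← (show ENNReal.ofReal ‖z‖ = (‖z‖₊ : ℝ≥0∞) from ofReal_norm z)]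
      exact ENNReal.ofReal_le_ofReal (norm_le_specRad hz)
    · obtain ⟨x, ⟨z, hz, rfl⟩, hx⟩ :
          ∃ x ∈ (fun z : ℂ => ‖z‖) '' spectrum ℂ (cf A), x = specRad A := by
        have : specRad A ∈ (fun z : ℂ => ‖z‖) '' spectrum ℂ (cf A) :=
          Set.Nonempty.csSup_mem (hS.image _) ((Matrix.finite_spectrum (cf A)).image _)
        exact ⟨specRad A, this, rfl⟩
      rw [← hx, (show ENNReal.ofReal ‖z‖ = (‖z‖₊ : ℝ≥0∞) from ofReal_norm z), spectralRadius]
      exact le_iSup₂ (f := fun k (_ : k ∈ spectrum ℂ (cf A)) => (‖k‖₊ : ℝ≥0∞)) z hz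
  · rw [Set.not_nonempty_iff_eq_empty] at hS
    have h1 : specRad A = 0 := by
      rw [specRad_def, hS]; simp [Real.sSup_empty]
    rw [h1, ENNReal.ofReal_zero, spectralRadius, hS]
    simp

lemma specRad_eq_zero_of_empty {A : Matrix ι ι ℝ} (hS : ¬ (spectrum ℂ (cf A)).Nonempty) :
    specRad A = 0 := by
  rw [Set.not_nonempty_iff_eq_empty] at hS
  rw [specRad_def, hS]; simp [Real.sSup_empty]

lemma mem_spectrum_iff_det {A : Matrix ι ι ℂ} {z : ℂ} :
    z ∈ spectrum ℂ A ↔ (z • (1 : Matrix ι ι ℂ) - A).det = 0 := by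
  rw [spectrum.mem_iff, Matrix.isUnit_iff_isUnit_det, isUnit_iff_ne_zero, not_ne_iff,
    Algebra.algebraMap_eq_smul_one]

lemma mem_spectrum_kron {P : Matrix ι ι ℂ} {Q : Matrix κ κ ℂ} {z₁ z₂ : ℂ}
    (h1 : z₁ ∈ spectrum ℂ P) (h2 : z₂ ∈ spectrum ℂ Q) :
    z₁ * z₂ ∈ spectrum ℂ (P ⊗ₖ Q) := by
  rw [mem_spectrum_iff_det] at h1 h2 ⊢
  obtain ⟨v, hv0, hv⟩ := Matrix.exists_mulVec_eq_zero_iff.mpr h1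
  obtain ⟨w, hw0, hw⟩ := Matrix.exists_mulVec_eq_zero_iff.mpr h2
  have hv' : P *ᵥ v = z₁ • v := by
    have := hv
    rw [Matrix.sub_mulVec, Matrix.smul_mulVec, Matrix.one_mulVec, sub_eq_zero] at this
    exact this.symm
  have hw' : Q *ᵥ w = z₂ • w := by
    have := hw
    rw [Matrix.sub_mulVec, Matrix.smul_mulVec, Matrix.one_mulVec, sub_eq_zero] at this
    exact this.symm
  refine Matrix.exists_mulVec_eq_zero_iff.mp ?_
  refine ⟨fun p => v p.1 * w p.2, ?_, ?_⟩
  · obtain ⟨i, hi⟩ := Function.ne_iff.mp hv0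
    obtain ⟨k, hk⟩ := Function.ne_iff.mp hw0
    exact Function.ne_iff.mpr ⟨(i, k), mul_ne_zero hi hk⟩
  · funext p
    obtain ⟨i, k⟩ := p
    have hPQ : ((P ⊗ₖ Q) *ᵥ fun p : ι × κ => v p.1 * w p.2) (i, k)
        = (P *ᵥ v) i * (Q *ᵥ w) k := by
      simp only [Matrix.mulVec, dotProduct, Fintype.sum_prod_type,
        Matrix.kroneckerMap_apply, Finset.sum_mul_sum]
      refine Finset.sum_congr rfl fun j _ => Finset.sum_congr rfl fun l _ => ?_
      ring
    rw [Matrix.sub_mulVec, Matrix.smul_mulVec, Matrix.one_mulVec]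
    simp only [Pi.sub_apply, Pi.smul_apply, smul_eq_mul, Pi.zero_apply]
    rw [hPQ, hv', hw']
    simp only [Pi.smul_apply, smul_eq_mul]
    ring

lemma spectralRadius_kron_le (A : Matrix ι ι ℝ) (B : Matrix κ κ ℝ) :
    spectralRadius ℂ (cf (A ⊗ₖ B)) ≤ spectralRadius ℂ (cf A) * spectralRadius ℂ (cf B) := by
  have hA := spectrum.pow_nnnorm_pow_one_div_tendsto_nhds_spectralRadius (cf A)
  have hB := spectrum.pow_nnnorm_pow_one_div_tendsto_nhds_spectralRadius (cf B)
  have hAne : spectralRadius ℂ (cf A) ≠ ⊤ := by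
    rw [spectralRadius_cf]; exact ENNReal.ofReal_ne_top
  have hBne : spectralRadius ℂ (cf B) ≠ ⊤ := by
    rw [spectralRadius_cf]; exact ENNReal.ofReal_ne_top
  have hmul : Tendsto (fun k : ℕ =>
      (‖(cf A) ^ k‖₊ : ℝ≥0∞) ^ (1 / (k : ℝ)) * (‖(cf B) ^ k‖₊ : ℝ≥0∞) ^ (1 / (k : ℝ)))
      atTop (nhds (spectralRadius ℂ (cf A) * spectralRadius ℂ (cf B))) :=
    ENNReal.Tendsto.mul hA (Or.inr hBne) hB (Or.inr hAne)
  calc spectralRadius ℂ (cf (A ⊗ₖ B))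
      ≤ liminf (fun k : ℕ => (‖(cf (A ⊗ₖ B)) ^ k‖₊ : ℝ≥0∞) ^ (1 / (k : ℝ))) atTop :=
        spectrum.spectralRadius_le_liminf_pow_nnnorm_pow_one_div ℂ _
    _ ≤ liminf (fun k : ℕ =>
          (‖(cf A) ^ k‖₊ : ℝ≥0∞) ^ (1 / (k : ℝ)) * (‖(cf B) ^ k‖₊ : ℝ≥0∞) ^ (1 / (k : ℝ)))
          atTop := by
        refine Filter.liminf_le_liminf (Filter.Eventually.of_forall fun k => ?_)
        have h1 : ‖(cf (A ⊗ₖ B)) ^ k‖₊ ≤ ‖(cf A) ^ k‖₊ * ‖(cf B) ^ k‖₊ := by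
          rw [cf_kron, kron_pow]
          exact nnnorm_kron_le _ _
        calc (‖(cf (A ⊗ₖ B)) ^ k‖₊ : ℝ≥0∞) ^ (1 / (k : ℝ))
            ≤ ((‖(cf A) ^ k‖₊ * ‖(cf B) ^ k‖₊ : ℝ≥0) : ℝ≥0∞) ^ (1 / (k : ℝ)) := by
              refine ENNReal.rpow_le_rpow ?_ (by positivity)
              exact_mod_cast h1
          _ = (‖(cf A) ^ k‖₊ : ℝ≥0∞) ^ (1 / (k : ℝ)) * (‖(cf B) ^ k‖₊ : ℝ≥0∞) ^ (1 / (k : ℝ)) := by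
              rw [ENNReal.coe_mul, ENNReal.mul_rpow_of_nonneg _ _ (by positivity)]
    _ = spectralRadius ℂ (cf A) * spectralRadius ℂ (cf B) := hmul.liminf_eq

lemma norm_pow_tendsto_zero {M : Matrix ι ι ℝ}
    (hρ : spectralRadius ℂ (cf M) < 1) :
    Tendsto (fun k : ℕ => ‖M ^ k‖) atTop (nhds 0) := by
  obtain ⟨r, hr1, hr2⟩ := exists_between hρ
  have hrtop : r ≠ ⊤ := (hr2.trans_le le_top).ne
  have hG := spectrum.pow_nnnorm_pow_one_div_tendsto_nhds_spectralRadius (cf M)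
  have hev := hG.eventually_lt_const hr1
  have hbound : ∀ᶠ k : ℕ in atTop, ‖M ^ k‖ ≤ r.toReal ^ k := by
    filter_upwards [hev, eventually_ge_atTop 1] with k hk hk1
    have hk0 : (k : ℝ) ≠ 0 := by positivity
    have key : (‖(cf M) ^ k‖₊ : ℝ≥0∞) ≤ r ^ k := by
      have h1 : (‖(cf M) ^ k‖₊ : ℝ≥0∞) = ((‖(cf M) ^ k‖₊ : ℝ≥0∞) ^ (1 / (k : ℝ))) ^ (k : ℕ) := by
        rw [← ENNReal.rpow_natCast (((‖(cf M) ^ k‖₊ : ℝ≥0∞)) ^ (1 / (k : ℝ))) k,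
          ← ENNReal.rpow_mul, one_div, inv_mul_cancel₀ hk0, ENNReal.rpow_one]
      rw [h1]
      exact pow_le_pow_left' hk.le k
    have key2 : ‖M ^ k‖₊ ≤ r.toNNReal ^ k := by
      have : (‖M ^ k‖₊ : ℝ≥0∞) ≤ ((r.toNNReal : ℝ≥0∞)) ^ k := by
        rw [ENNReal.coe_toNNReal hrtop]
        calc (‖M ^ k‖₊ : ℝ≥0∞) = (‖(cf M) ^ k‖₊ : ℝ≥0∞) := by rw [← cf_pow, nnnorm_cf]
          _ ≤ r ^ k := key
      rw [← ENNReal.coe_pow] at this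
      exact_mod_cast this
    calc ‖M ^ k‖ = (‖M ^ k‖₊ : ℝ) := rfl
      _ ≤ ((r.toNNReal ^ k : ℝ≥0) : ℝ) := by exact_mod_cast key2
      _ = r.toReal ^ k := by simp [ENNReal.toReal]
  have hlim : Tendsto (fun k : ℕ => r.toReal ^ k) atTop (nhds 0) := by
    apply tendsto_pow_atTop_nhds_zero_of_lt_one ENNReal.toReal_nonneg
    have : r.toReal < (1 : ℝ≥0∞).toReal := ENNReal.toReal_strict_mono (by simp) hr2
    simpa using this
  exact squeeze_zero' (Filter.Eventually.of_forall fun k => norm_nonneg _) hbound hlim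

end FJAux

open FJAux in
/-- ΛW ⊗ C is Schur stable iff ρ(ΛW)·ρ(C) < 1; if this holds, the
multidimensional FJ dynamics x(k+1) = (ΛW ⊗ C)x(k) + ((I-Λ) ⊗ I)u, x(0) = u, converges
to x'_C = (I - ΛW ⊗ C)⁻¹ ((I-Λ) ⊗ I) u for every u. -/
theorem fj_multidim_stability {n m : ℕ} (W : Matrix (Fin n) (Fin n) ℝ)
    (lam : Fin n → ℝ) (C : Matrix (Fin m) (Fin m) ℝ)
    (hW0 : ∀ i j, 0 ≤ W i j) (hW1 : ∀ i, ∑ j, W i j = 1)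
    (hlam : ∀ i, 0 ≤ lam i ∧ lam i ≤ 1) :
    (specRad ((Matrix.diagonal lam * W) ⊗ₖ C) < 1 ↔
      specRad (Matrix.diagonal lam * W) * specRad C < 1) ∧
    (specRad ((Matrix.diagonal lam * W) ⊗ₖ C) < 1 →
      ∀ u : Fin n × Fin m → ℝ,
        Tendsto (fun k => (fun x => ((Matrix.diagonal lam * W) ⊗ₖ C).mulVec x
            + (((1 - Matrix.diagonal lam) ⊗ₖ (1 : Matrix (Fin m) (Fin m) ℝ))).mulVec u)^[k] u)
          atTop
          (nhds ((1 - (Matrix.diagonal lam * W) ⊗ₖ C)⁻¹.mulVec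
            (((1 - Matrix.diagonal lam) ⊗ₖ (1 : Matrix (Fin m) (Fin m) ℝ)).mulVec u)))) := by
  set A : Matrix (Fin n) (Fin n) ℝ := Matrix.diagonal lam * W with hA
  set M : Matrix (Fin n × Fin m) (Fin n × Fin m) ℝ := A ⊗ₖ C with hM
  have hspecM : spectralRadius ℂ (cf M) = ENNReal.ofReal (specRad M) := spectralRadius_cf M
  constructor
  · constructor
    · -- forward: specRad M < 1 → specRad A * specRad C < 1
      intro h
      by_cases hSA : (spectrum ℂ (cf A)).Nonempty
      · by_cases hSC : (spectrum ℂ (cf C)).Nonempty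
        · have hmemA : specRad A ∈ (fun z : ℂ => ‖z‖) '' spectrum ℂ (cf A) :=
            Set.Nonempty.csSup_mem (hSA.image _) ((Matrix.finite_spectrum (cf A)).image _)
          have hmemC : specRad C ∈ (fun z : ℂ => ‖z‖) '' spectrum ℂ (cf C) :=
            Set.Nonempty.csSup_mem (hSC.image _) ((Matrix.finite_spectrum (cf C)).image _)
          obtain ⟨z₁, hz₁, hz₁'⟩ := hmemA
          obtain ⟨z₂, hz₂, hz₂'⟩ := hmemC
          have hmem : z₁ * z₂ ∈ spectrum ℂ (cf M) := by
            rw [hM, cf_kron]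
            exact mem_spectrum_kron hz₁ hz₂
          calc specRad A * specRad C = ‖z₁ * z₂‖ := by rw [← hz₁', ← hz₂', norm_mul]
            _ ≤ specRad M := norm_le_specRad hmem
            _ < 1 := h
        · rw [specRad_eq_zero_of_empty hSC, mul_zero]; norm_num
      · rw [specRad_eq_zero_of_empty hSA, zero_mul]; norm_num
    · -- backward
      intro h
      have hle := spectralRadius_kron_le A C
      rw [spectralRadius_cf, spectralRadius_cf, spectralRadius_cf,
        ← ENNReal.ofReal_mul (specRad_nonneg A)] at hle
      have h1 : ENNReal.ofReal (specRad A * specRad C) < 1 := ENNReal.ofReal_lt_one.mpr h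
      exact ENNReal.ofReal_lt_one.mp (lt_of_le_of_lt hle h1)
  · -- convergence
    intro h u
    have hρ : spectralRadius ℂ (cf M) < 1 := by
      rw [hspecM]; exact ENNReal.ofReal_lt_one.mpr h
    -- invertibility of 1 - M
    have hdet : IsUnit (1 - M).det := by
      rw [isUnit_iff_ne_zero]
      intro h0
      have hmem : (1 : ℂ) ∈ spectrum ℂ (cf M) := by
        rw [mem_spectrum_iff_det, one_smul]
        have hmap : (1 : Matrix (Fin n × Fin m) (Fin n × Fin m) ℂ) - cf M = cf (1 - M) := by
          ext p q
          simp [cf, Matrix.map_apply, Matrix.sub_apply, Matrix.one_apply, apply_ite]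
        rw [hmap]
        show ((1 - M).map (⇑(algebraMap ℝ ℂ))).det = 0
        have hdet2 : ((1 - M).map (⇑(algebraMap ℝ ℂ))).det = (algebraMap ℝ ℂ) (1 - M).det :=
          ((algebraMap ℝ ℂ).map_det (1 - M)).symm
        rw [hdet2, h0, map_zero]
      have : (1 : ℝ) ≤ specRad M := by
        have := norm_le_specRad hmem
        simpa using this
      linarith
    set b : Fin n × Fin m → ℝ :=
      ((1 - Matrix.diagonal lam) ⊗ₖ (1 : Matrix (Fin m) (Fin m) ℝ)).mulVec u with hb
    set xs : Fin n × Fin m → ℝ := (1 - M)⁻¹.mulVec b with hxs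
    have hfix : M.mulVec xs + b = xs := by
      have h1 : (1 - M).mulVec xs = b := by
        rw [hxs, Matrix.mulVec_mulVec, Matrix.mul_nonsing_inv _ hdet, Matrix.one_mulVec]
      rw [Matrix.sub_mulVec, Matrix.one_mulVec] at h1
      rw [add_comm]
      exact (sub_eq_iff_eq_add.mp h1).symm
    have hit : ∀ k : ℕ,
        (fun x => M.mulVec x + b)^[k] u = xs + (M ^ k).mulVec (u - xs) := by
      intro k
      induction k with
      | zero =>
        rw [Function.iterate_zero_apply, pow_zero, Matrix.one_mulVec]
        abel
      | succ k ih =>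
        rw [Function.iterate_succ_apply', ih]
        calc M.mulVec (xs + (M ^ k).mulVec (u - xs)) + b
            = (M.mulVec xs + b) + M.mulVec ((M ^ k).mulVec (u - xs)) := by
              rw [Matrix.mulVec_add]; abel
          _ = xs + M.mulVec ((M ^ k).mulVec (u - xs)) := by rw [hfix]
          _ = xs + (M * M ^ k).mulVec (u - xs) := by rw [Matrix.mulVec_mulVec]
          _ = xs + (M ^ (k + 1)).mulVec (u - xs) := by rw [← pow_succ']
    have hnorm := norm_pow_tendsto_zero (M := M) hρ
    have htend0 : Tendsto (fun k : ℕ => (M ^ k).mulVec (u - xs)) atTop (nhds 0) := by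
      apply squeeze_zero_norm (a := fun k : ℕ => ‖M ^ k‖ * ‖u - xs‖)
      · intro k
        exact Matrix.linfty_opNorm_mulVec _ _
      · simpa using hnorm.mul_const ‖u - xs‖
    have : Tendsto (fun k : ℕ => xs + (M ^ k).mulVec (u - xs)) atTop (nhds (xs + 0)) :=
      htend0.const_add xs
    rw [add_zero] at this
    refine Tendsto.congr (fun k => (hit k).symm) this
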